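/- (High-gain limit of power sharing: distance-based sharing) Let B be the susceptance matrix of a connected weighted graph partitioned into loads and inverters, and K_I diagonal with strictly negative entries. For ε > 0 define B_{red,ε} := B_LL − B_LI(B_II + εK_I)^{−1}B_IL and S_ε := εK_I(B_II + εK_I)^{−1}B_IL B_{red,ε}^{−1} (all inverses exist for ε > 0). Then S_ε converges to B_IL B_LL^{−1} as ε → +∞. -/

import Mathlib

open Matrix

def suscGraph {V : Type*} (B : Matrix V V ℝ) : SimpleGraph V where
  Adj i j := i ≠ j ∧ 0 < B i j ∧ 0 < B j i
  symm := ⟨fun _ _ h => ⟨h.1.symm, h.2.2, h.2.1⟩⟩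
  loopless := ⟨fun _ h => h.1 rfl⟩

def IsSusceptance {V : Type*} [Fintype V] [DecidableEq V] (B : Matrix V V ℝ) : Prop :=
  B.IsSymm ∧ (∀ i j, i ≠ j → 0 ≤ B i j) ∧
    (∀ i, B i i = -∑ j ∈ Finset.univ.erase i, B i j) ∧ (suscGraph B).Connected

section Aux

lemma contAt_matrix_mul {X : Type*} [TopologicalSpace X] {l p q : Type*} [Fintype p]
    {f : X → Matrix l p ℝ} {g : X → Matrix p q ℝ} {x : X}
    (hf : ContinuousAt f x) (hg : ContinuousAt g x) :
    ContinuousAt (fun y => f y * g y) x := by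
  have h : Continuous (fun pq : Matrix l p ℝ × Matrix p q ℝ => pq.1 * pq.2) :=
    continuous_fst.matrix_mul continuous_snd
  exact h.continuousAt.comp (hf.prodMk hg)

lemma susc_quad {V : Type*} [Fintype V] (B : Matrix V V ℝ)
    (hs : ∀ i j, B i j = B j i) (hr : ∀ i, ∑ j, B i j = 0) (x : V → ℝ) :
    2 * (x ⬝ᵥ B *ᵥ x) = -∑ i, ∑ j, B i j * (x i - x j) ^ 2 := by
  have h1 : ∑ i, ∑ j, B i j * x i ^ 2 = 0 :=
    Finset.sum_eq_zero fun i _ => by rw [← Finset.sum_mul, hr i, zero_mul]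
  have h2 : ∑ i, ∑ j, B i j * x j ^ 2 = 0 := by
    rw [Finset.sum_comm]
    refine Finset.sum_eq_zero fun j _ => ?_
    have hc : ∑ i, B i j = 0 := by
      rw [Finset.sum_congr rfl fun i _ => hs i j, hr j]
    rw [← Finset.sum_mul, hc, zero_mul]
  have hx : x ⬝ᵥ B *ᵥ x = ∑ i, ∑ j, x i * (B i j * x j) := by
    simp [dotProduct, mulVec, Finset.mul_sum]
  have e : ∑ i, ∑ j, B i j * (x i - x j) ^ 2
      = ∑ i, ∑ j, (B i j * x i ^ 2 + B i j * x j ^ 2 - 2 * (x i * (B i j * x j))) :=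
    Finset.sum_congr rfl fun i _ => Finset.sum_congr rfl fun j _ => by ring
  have e2 : ∑ i, ∑ j, (B i j * x i ^ 2 + B i j * x j ^ 2 - 2 * (x i * (B i j * x j)))
      = (∑ i, ∑ j, B i j * x i ^ 2) + (∑ i, ∑ j, B i j * x j ^ 2)
        - 2 * ∑ i, ∑ j, x i * (B i j * x j) := by
    simp [Finset.sum_add_distrib, Finset.sum_sub_distrib, Finset.mul_sum]
  rw [hx, e, e2, h1, h2]
  ring

lemma susc_term_nonneg {V : Type*} [Fintype V] [DecidableEq V] (B : Matrix V V ℝ)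
    (hnn : ∀ i j, i ≠ j → 0 ≤ B i j) (x : V → ℝ) (i j : V) :
    0 ≤ B i j * (x i - x j) ^ 2 := by
  rcases eq_or_ne i j with rfl | h
  · simp
  · exact mul_nonneg (hnn i j h) (sq_nonneg _)

lemma susc_quad_nonpos {V : Type*} [Fintype V] [DecidableEq V] (B : Matrix V V ℝ)
    (hs : ∀ i j, B i j = B j i) (hr : ∀ i, ∑ j, B i j = 0)
    (hnn : ∀ i j, i ≠ j → 0 ≤ B i j) (x : V → ℝ) :
    x ⬝ᵥ B *ᵥ x ≤ 0 := by
  have h := susc_quad B hs hr x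
  have hpos : 0 ≤ ∑ i, ∑ j, B i j * (x i - x j) ^ 2 :=
    Finset.sum_nonneg fun i _ => Finset.sum_nonneg fun j _ => susc_term_nonneg B hnn x i j
  linarith

lemma susc_quad_eq_zero {V : Type*} [Fintype V] [DecidableEq V] (B : Matrix V V ℝ)
    (hs : ∀ i j, B i j = B j i) (hr : ∀ i, ∑ j, B i j = 0)
    (hnn : ∀ i j, i ≠ j → 0 ≤ B i j) (hconn : (suscGraph B).Connected)
    (x : V → ℝ) (h0 : x ⬝ᵥ B *ᵥ x = 0) : ∀ a b, x a = x b := by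
  have h := susc_quad B hs hr x
  rw [h0, mul_zero] at h
  have hsum : ∑ i, ∑ j, B i j * (x i - x j) ^ 2 = 0 := by linarith
  have hterm : ∀ i j, B i j * (x i - x j) ^ 2 = 0 := by
    intro i j
    have h1 := (Finset.sum_eq_zero_iff_of_nonneg
      (fun i _ => Finset.sum_nonneg fun j _ => susc_term_nonneg B hnn x i j)).1 hsum i
      (Finset.mem_univ i)
    exact (Finset.sum_eq_zero_iff_of_nonneg
      (fun j _ => susc_term_nonneg B hnn x i j)).1 h1 j (Finset.mem_univ j)
  have hadj : ∀ a b, (suscGraph B).Adj a b → x a = x b := by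
    intro a b hab
    have ht := hterm a b
    have hBab : B a b ≠ 0 := ne_of_gt (show a ≠ b ∧ 0 < B a b ∧ 0 < B b a from hab).2.1
    have hsq : (x a - x b) ^ 2 = 0 := by
      rcases mul_eq_zero.1 ht with h' | h'
      · exact absurd h' hBab
      · exact h'
    have := pow_eq_zero_iff (n := 2) (by norm_num) |>.1 hsq
    linarith [sub_eq_zero.1 this]
  intro a b
  obtain ⟨w⟩ := hconn.preconnected a b
  induction w with
  | nil => rfl
  | cons hab p ih => exact (hadj _ _ hab).trans ih

variable {n m : ℕ}

lemma quad_elim_zero_left (B : Matrix (Fin n ⊕ Fin m) (Fin n ⊕ Fin m) ℝ) (v : Fin m → ℝ) :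
    (Sum.elim 0 v) ⬝ᵥ B *ᵥ (Sum.elim 0 v) = v ⬝ᵥ B.toBlocks₂₂ *ᵥ v := by
  conv_lhs => rw [← fromBlocks_toBlocks B]
  rw [fromBlocks_mulVec, sumElim_dotProduct_sumElim]
  simp

lemma quad_elim_zero_right (B : Matrix (Fin n ⊕ Fin m) (Fin n ⊕ Fin m) ℝ) (u : Fin n → ℝ) :
    (Sum.elim u 0) ⬝ᵥ B *ᵥ (Sum.elim u 0) = u ⬝ᵥ B.toBlocks₁₁ *ᵥ u := by
  conv_lhs => rw [← fromBlocks_toBlocks B]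
  rw [fromBlocks_mulVec, sumElim_dotProduct_sumElim]
  simp

lemma quad_corner (M : Matrix (Fin m) (Fin m) ℝ) (y : Fin n ⊕ Fin m → ℝ) :
    y ⬝ᵥ (fromBlocks 0 0 0 M : Matrix (Fin n ⊕ Fin m) (Fin n ⊕ Fin m) ℝ) *ᵥ y
      = (y ∘ Sum.inr) ⬝ᵥ M *ᵥ (y ∘ Sum.inr) := by
  conv_lhs => rw [← Sum.elim_comp_inl_inr y]
  rw [fromBlocks_mulVec, sumElim_dotProduct_sumElim]
  simp

lemma diag_quad (k : Fin m → ℝ) (v : Fin m → ℝ) :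
    v ⬝ᵥ (Matrix.diagonal k) *ᵥ v = ∑ i, k i * v i ^ 2 := by
  simp [dotProduct, mulVec_diagonal]
  exact Finset.sum_congr rfl fun i _ => by ring

lemma diag_quad_nonpos (k : Fin m → ℝ) (hk : ∀ i, k i < 0) (v : Fin m → ℝ) :
    v ⬝ᵥ (Matrix.diagonal k) *ᵥ v ≤ 0 := by
  rw [diag_quad]
  exact Finset.sum_nonpos fun i _ => mul_nonpos_of_nonpos_of_nonneg (hk i).le (sq_nonneg _)

lemma diag_quad_neg (k : Fin m → ℝ) (hk : ∀ i, k i < 0) (v : Fin m → ℝ) (hv : v ≠ 0) :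
    v ⬝ᵥ (Matrix.diagonal k) *ᵥ v < 0 := by
  rw [diag_quad]
  obtain ⟨j, hj⟩ := Function.ne_iff.1 hv
  have h0 : (0 : ℝ) = ∑ _i : Fin m, (0 : ℝ) := by simp
  rw [h0]
  refine Finset.sum_lt_sum (fun i _ => mul_nonpos_of_nonpos_of_nonneg (hk i).le (sq_nonneg _))
    ⟨j, Finset.mem_univ j, ?_⟩
  exact mul_neg_of_neg_of_pos (hk j) ((sq_nonneg (v j)).lt_of_ne (Ne.symm (pow_ne_zero 2 hj)))

end Aux

/-- High-gain limit of power sharing: all the inverses defining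
`S_ε = ε K_I (B_II + ε K_I)⁻¹ B_IL B_{red,ε}⁻¹` exist for `ε > 0`, and
`S_ε → B_IL B_LL⁻¹` as `ε → +∞`. -/
theorem power_sharing_high_gain_limit {n m : ℕ} (hn : 0 < n) (hm : 0 < m)
    (B : Matrix (Fin n ⊕ Fin m) (Fin n ⊕ Fin m) ℝ) (hB : IsSusceptance B)
    (k : Fin m → ℝ) (hk : ∀ i, k i < 0) :
    (∀ ε : ℝ, 0 < ε →
      IsUnit (B.toBlocks₂₂ + ε • Matrix.diagonal k).det ∧
      IsUnit (B.toBlocks₁₁ -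
        B.toBlocks₁₂ * (B.toBlocks₂₂ + ε • Matrix.diagonal k)⁻¹ *
          B.toBlocks₂₁).det) ∧
    Filter.Tendsto
      (fun ε : ℝ =>
        (ε • Matrix.diagonal k) * (B.toBlocks₂₂ + ε • Matrix.diagonal k)⁻¹ *
          B.toBlocks₂₁ *
          (B.toBlocks₁₁ -
            B.toBlocks₁₂ * (B.toBlocks₂₂ + ε • Matrix.diagonal k)⁻¹ *
              B.toBlocks₂₁)⁻¹)
      Filter.atTop (nhds (B.toBlocks₂₁ * B.toBlocks₁₁⁻¹)) := by
  obtain ⟨hsym, hnn, hdiag, hconn⟩ := hB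
  have hs : ∀ i j, B i j = B j i := fun i j => hsym.apply j i
  have hr : ∀ i, ∑ j, B i j = 0 := by
    intro i
    rw [← Finset.add_sum_erase _ _ (Finset.mem_univ i), hdiag i, neg_add_cancel]
  set D := Matrix.diagonal k with hD
  have hq : ∀ y, y ⬝ᵥ B *ᵥ y ≤ 0 := susc_quad_nonpos B hs hr hnn
  have hq0 := susc_quad_eq_zero B hs hr hnn hconn
  have i0 : Fin m := ⟨0, hm⟩
  -- invertibility of `s • B₂₂ + t • D` for `s ≥ 0`, `t > 0`
  have hdet2 : ∀ s t : ℝ, 0 ≤ s → 0 < t → (s • B.toBlocks₂₂ + t • D).det ≠ 0 := by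
    intro s t hsge ht hdet0
    obtain ⟨v, hv0, hv⟩ := Matrix.exists_mulVec_eq_zero_iff.2 hdet0
    have h1 : v ⬝ᵥ (s • B.toBlocks₂₂ + t • D) *ᵥ v = 0 := by rw [hv, dotProduct_zero]
    rw [add_mulVec, dotProduct_add, smul_mulVec, smul_mulVec,
      dotProduct_smul, dotProduct_smul] at h1
    simp only [smul_eq_mul] at h1
    have hb : v ⬝ᵥ B.toBlocks₂₂ *ᵥ v ≤ 0 := by
      have := hq (Sum.elim 0 v)
      rwa [quad_elim_zero_left] at this
    have hd := diag_quad_neg k hk v hv0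
    nlinarith [mul_nonpos_of_nonneg_of_nonpos hsge hb, mul_neg_of_pos_of_neg ht hd]
  have hdet1 : B.toBlocks₁₁.det ≠ 0 := by
    intro hdet0
    obtain ⟨u, hu0, hu⟩ := Matrix.exists_mulVec_eq_zero_iff.2 hdet0
    have h1 : (Sum.elim u 0) ⬝ᵥ B *ᵥ (Sum.elim u 0) = 0 := by
      rw [quad_elim_zero_right, hu, dotProduct_zero]
    have hconst := hq0 _ h1
    apply hu0
    funext j
    simpa using hconst (Sum.inl j) (Sum.inr i0)
  have hdetQ : ∀ ε : ℝ, 0 < ε → (B + fromBlocks 0 0 0 (ε • D)).det ≠ 0 := by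
    intro ε hε hdet0
    obtain ⟨y, hy0, hy⟩ := Matrix.exists_mulVec_eq_zero_iff.2 hdet0
    have h1 : y ⬝ᵥ (B + fromBlocks 0 0 0 (ε • D)) *ᵥ y = 0 := by rw [hy, dotProduct_zero]
    rw [add_mulVec, dotProduct_add, quad_corner] at h1
    have hcor : (y ∘ Sum.inr) ⬝ᵥ (ε • D) *ᵥ (y ∘ Sum.inr)
        = ε * ((y ∘ Sum.inr) ⬝ᵥ D *ᵥ (y ∘ Sum.inr)) := by
      rw [smul_mulVec, dotProduct_smul, smul_eq_mul]
    rw [hcor] at h1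
    have hb := hq y
    have hd := diag_quad_nonpos k hk (y ∘ Sum.inr)
    have hvz : y ∘ Sum.inr = 0 := by
      by_contra hv
      have := diag_quad_neg k hk _ hv
      nlinarith
    have hdz : (y ∘ Sum.inr) ⬝ᵥ D *ᵥ (y ∘ Sum.inr) = 0 := by
      rw [hvz]; simp
    have hBy : y ⬝ᵥ B *ᵥ y = 0 := by rw [hdz] at h1; linarith
    have hconst := hq0 y hBy
    apply hy0
    funext a
    calc y a = y (Sum.inr i0) := hconst a _
      _ = (y ∘ Sum.inr) i0 := rfl
      _ = 0 := by rw [hvz]; rfl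
  have hunit2 : ∀ ε : ℝ, 0 < ε → IsUnit (B.toBlocks₂₂ + ε • D).det := by
    intro ε hε
    refine isUnit_iff_ne_zero.2 ?_
    have := hdet2 1 ε zero_le_one hε
    rwa [one_smul] at this
  have hunitSchur : ∀ ε : ℝ, 0 < ε →
      IsUnit (B.toBlocks₁₁ - B.toBlocks₁₂ * (B.toBlocks₂₂ + ε • D)⁻¹ * B.toBlocks₂₁).det := by
    intro ε hε
    haveI : Invertible (B.toBlocks₂₂ + ε • D) :=
      (B.toBlocks₂₂ + ε • D).invertibleOfIsUnitDet (hunit2 ε hε)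
    have hQ : fromBlocks B.toBlocks₁₁ B.toBlocks₁₂ B.toBlocks₂₁ (B.toBlocks₂₂ + ε • D)
        = B + fromBlocks 0 0 0 (ε • D) := by
      conv_rhs => rw [← fromBlocks_toBlocks B]
      rw [fromBlocks_add]
      simp
    have hdfb := Matrix.det_fromBlocks₂₂ B.toBlocks₁₁ B.toBlocks₁₂ B.toBlocks₂₁
      (B.toBlocks₂₂ + ε • D)
    rw [hQ, Matrix.invOf_eq_nonsing_inv] at hdfb
    refine isUnit_iff_ne_zero.2 fun hc => hdetQ ε hε ?_
    rw [hdfb, hc, mul_zero]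
  refine ⟨fun ε hε => ⟨hunit2 ε hε, hunitSchur ε hε⟩, ?_⟩
  -- the limit
  have hDdet : D.det ≠ 0 := by
    rw [hD, Matrix.det_diagonal]
    exact Finset.prod_ne_zero_iff.2 fun i _ => (hk i).ne
  set G : ℝ → Matrix (Fin m) (Fin n) ℝ := fun t =>
    D * (t • B.toBlocks₂₂ + D)⁻¹ * B.toBlocks₂₁ *
      (B.toBlocks₁₁ - t • (B.toBlocks₁₂ * (t • B.toBlocks₂₂ + D)⁻¹ * B.toBlocks₂₁))⁻¹ with hG
  have hNdet : ∀ t : ℝ, 0 ≤ t → (t • B.toBlocks₂₂ + D).det ≠ 0 := by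
    intro t ht
    have := hdet2 t 1 ht one_pos
    rwa [one_smul] at this
  have hmatinv : ∀ {p : ℕ} (A : Matrix (Fin p) (Fin p) ℝ), A.det ≠ 0 →
      ContinuousAt Inv.inv A := by
    intro p A hA
    apply continuousAt_matrix_inv
    rw [Ring.inverse_eq_inv']
    exact continuousAt_inv₀ hA
  have hNc : Continuous fun t : ℝ => t • B.toBlocks₂₂ + D :=
    (continuous_id.smul continuous_const).add continuous_const
  have hNinvc : ContinuousAt (fun t : ℝ => (t • B.toBlocks₂₂ + D)⁻¹) 0 :=
    ContinuousAt.comp (hmatinv _ (hNdet 0 le_rfl)) hNc.continuousAt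
  have hinnerc : ContinuousAt (fun t : ℝ =>
      B.toBlocks₁₁ - t • (B.toBlocks₁₂ * (t • B.toBlocks₂₂ + D)⁻¹ * B.toBlocks₂₁)) 0 :=
    continuousAt_const.sub (continuousAt_id.smul
      (contAt_matrix_mul (contAt_matrix_mul continuousAt_const hNinvc) continuousAt_const))
  have hinnerinvc : ContinuousAt (fun t : ℝ =>
      (B.toBlocks₁₁ - t • (B.toBlocks₁₂ * (t • B.toBlocks₂₂ + D)⁻¹ * B.toBlocks₂₁))⁻¹) 0 := by
    refine ContinuousAt.comp ?_ hinnerc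
    simp only [zero_smul, sub_zero]
    exact hmatinv _ hdet1
  have hGc : ContinuousAt G 0 :=
    contAt_matrix_mul
      (contAt_matrix_mul (contAt_matrix_mul continuousAt_const hNinvc) continuousAt_const)
      hinnerinvc
  have hG0 : G 0 = B.toBlocks₂₁ * B.toBlocks₁₁⁻¹ := by
    simp only [hG, zero_smul, zero_add, sub_zero]
    rw [Matrix.mul_nonsing_inv _ (isUnit_iff_ne_zero.2 hDdet), Matrix.one_mul]
  have htend : Filter.Tendsto (fun ε : ℝ => G ε⁻¹) Filter.atTop
      (nhds (B.toBlocks₂₁ * B.toBlocks₁₁⁻¹)) := by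
    rw [← hG0]
    exact hGc.tendsto.comp tendsto_inv_atTop_zero
  refine Filter.Tendsto.congr' ?_ htend
  filter_upwards [Filter.eventually_gt_atTop 0] with ε hε
  have hεne : ε ≠ 0 := hε.ne'
  have hkey : (B.toBlocks₂₂ + ε • D)⁻¹ = ε⁻¹ • (ε⁻¹ • B.toBlocks₂₂ + D)⁻¹ := by
    have hrw : B.toBlocks₂₂ + ε • D = ε • (ε⁻¹ • B.toBlocks₂₂ + D) := by
      rw [smul_add, smul_smul, mul_inv_cancel₀ hεne, one_smul]
    rw [hrw]
    haveI := invertibleOfNonzero hεne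
    rw [Matrix.inv_smul _ ε (isUnit_iff_ne_zero.2 (hNdet ε⁻¹ (by positivity))), invOf_eq_inv]
  simp only [hG, hkey]
  simp only [Matrix.mul_smul, Matrix.smul_mul, smul_smul, inv_mul_cancel₀ hεne,
    mul_inv_cancel₀ hεne, one_smul]
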